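/- arXiv:1603.02937 — 3 statements merged into one kernel-verified Lean document; each statement's English description precedes it below -/
import Mathlib

section
/- Let Ω be a body in R^m and α < 0. The function V_Ω^{(α)} restricted to the interior of Ω is continuous. -/
open MeasureTheory Metric Set Filter
open scoped ENNReal NNReal Real
noncomputable section

/-- Open cone of vertex `x`, axis direction `v`, aperture angle `κ`, height `δ`. -/
def cone (m : ℕ) (x v : EuclideanSpace ℝ (Fin m)) (κ : ℝ) (δ : ℝ≥0∞) :
    Set (EuclideanSpace ℝ (Fin m)) :=
  {y | 0 < ‖y - x‖ ∧ ENNReal.ofReal ‖y - x‖ < δ ∧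
    (inner ℝ (y - x) v : ℝ) > ‖y - x‖ * Real.cos (κ / 2)}

/-- The (m-1)-dimensional measure of the unit sphere in `ℝ^m`. -/
def sphereArea (m : ℕ) : ℝ :=
  m * (volume (ball (0 : EuclideanSpace ℝ (Fin m)) 1)).toReal

/-- A body: the closure of a (nonempty) bounded open set. -/
def IsBody (m : ℕ) (Ω : Set (EuclideanSpace ℝ (Fin m))) : Prop :=
  ∃ O : Set (EuclideanSpace ℝ (Fin m)),
    IsOpen O ∧ Bornology.IsBounded O ∧ O.Nonempty ∧ Ω = closure O

/-- The renormalized Riesz potential of order `α ≤ 0`. -/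
def Vpot (m : ℕ) (Ω : Set (EuclideanSpace ℝ (Fin m))) (α : ℝ)
    (x : EuclideanSpace ℝ (Fin m)) : ℝ :=
  limUnder (nhdsWithin (0:ℝ) (Set.Ioi 0)) (fun ε =>
    (∫ ξ in Ω \ closedBall x ε, ‖x - ξ‖ ^ (α - m)) -
      (if α = 0 then sphereArea m * Real.log (1 / ε)
       else sphereArea m * ε ^ α / (-α)))

section Aux

variable {m : ℕ} {α : ℝ}

/-- Integrability of the truncated kernel on finite-measure sets. -/
lemma integrableOn_max_rpow (hα : α < 0) {ε : ℝ} (hε : 0 < ε)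
    (x : EuclideanSpace ℝ (Fin m)) {s : Set (EuclideanSpace ℝ (Fin m))}
    (hfin : volume s ≠ ∞) :
    IntegrableOn (fun ξ => (max ‖x - ξ‖ ε) ^ (α - m)) s := by
  have hexp : α - (m:ℝ) ≤ 0 := by
    have : (0:ℝ) ≤ m := Nat.cast_nonneg m
    linarith
  apply Measure.integrableOn_of_bounded (M := ε ^ (α - (m:ℝ))) hfin
  · exact (((continuous_const.sub continuous_id).norm.max continuous_const).rpow_const
      (fun ξ => Or.inl (ne_of_gt (lt_of_lt_of_le hε (le_max_right _ _))))).measurable.aestronglyMeasurable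
  · refine Filter.Eventually.of_forall fun ξ => ?_
    rw [Real.norm_eq_abs, abs_of_nonneg (Real.rpow_nonneg (le_trans hε.le (le_max_right _ _)) _)]
    exact Real.rpow_le_rpow_of_nonpos hε (le_max_right _ _) hexp

lemma integrableOn_kernel_away (hα : α < 0) {ε : ℝ} (hε : 0 < ε)
    (x : EuclideanSpace ℝ (Fin m)) {s : Set (EuclideanSpace ℝ (Fin m))}
    (hs : MeasurableSet s) (hfin : volume s ≠ ∞)
    (haway : ∀ ξ ∈ s, ε ≤ ‖x - ξ‖) :
    IntegrableOn (fun ξ => ‖x - ξ‖ ^ (α - m)) s := by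
  refine (integrableOn_max_rpow hα hε x hfin).congr_fun (fun ξ hξ => ?_) hs
  dsimp only
  rw [max_eq_left (haway ξ hξ)]

/-- The integral of the kernel over an annulus. -/
lemma annulus_integral (hm : 0 < m) (hα : α < 0)
    (x : EuclideanSpace ℝ (Fin m)) {ε' ε : ℝ} (h0 : 0 < ε') (hle : ε' ≤ ε) :
    ∫ ξ in closedBall x ε \ closedBall x ε', ‖x - ξ‖ ^ (α - m) =
      sphereArea m * ε' ^ α / (-α) - sphereArea m * ε ^ α / (-α) := by
  haveI hnt : Nontrivial (EuclideanSpace ℝ (Fin m)) :=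
    Module.nontrivial_of_finrank_pos (R := ℝ) (by rw [finrank_euclideanSpace_fin]; exact hm)
  have hα0 : α ≠ 0 := hα.ne
  have hmp : MeasurePreserving (fun ξ : EuclideanSpace ℝ (Fin m) => x - ξ) volume volume :=
    Measure.measurePreserving_sub_left volume x
  have hemb : MeasurableEmbedding (fun ξ : EuclideanSpace ℝ (Fin m) => x - ξ) :=
    (MeasurableEquiv.subLeft x).measurableEmbedding
  have hpre : (fun ξ : EuclideanSpace ℝ (Fin m) => x - ξ) ⁻¹'
      (closedBall 0 ε \ closedBall 0 ε') = closedBall x ε \ closedBall x ε' := by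
    ext ξ
    simp [mem_closedBall, dist_eq_norm, norm_sub_rev ξ x]
  have step1 : ∫ ξ in closedBall x ε \ closedBall x ε', ‖x - ξ‖ ^ (α - (m:ℝ)) =
      ∫ η in closedBall (0:EuclideanSpace ℝ (Fin m)) ε \ closedBall 0 ε',
        ‖η‖ ^ (α - (m:ℝ)) := by
    rw [← hpre]
    exact hmp.setIntegral_preimage_emb hemb (fun η => ‖η‖ ^ (α - (m:ℝ))) _
  have hS : MeasurableSet (closedBall (0:EuclideanSpace ℝ (Fin m)) ε \ closedBall 0 ε') :=
    measurableSet_closedBall.diff measurableSet_closedBall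
  have hmem : ∀ η : EuclideanSpace ℝ (Fin m),
      η ∈ closedBall (0:EuclideanSpace ℝ (Fin m)) ε \ closedBall 0 ε' ↔ ‖η‖ ∈ Ioc ε' ε := by
    intro η
    simp [mem_closedBall_zero_iff, mem_Ioc, not_le, and_comm]
  have step2 : ∫ η in closedBall (0:EuclideanSpace ℝ (Fin m)) ε \ closedBall 0 ε',
        ‖η‖ ^ (α - (m:ℝ)) =
      ∫ η : EuclideanSpace ℝ (Fin m), (Ioc ε' ε).indicator (fun r => r ^ (α - (m:ℝ))) ‖η‖ := by
    rw [← integral_indicator hS]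
    congr 1
    ext η
    by_cases h : ‖η‖ ∈ Ioc ε' ε
    · rw [Set.indicator_of_mem ((hmem η).mpr h), Set.indicator_of_mem h]
    · rw [Set.indicator_of_notMem (fun hs => h ((hmem η).mp hs)),
        Set.indicator_of_notMem h]
  have step3 := integral_fun_norm_addHaar (volume : Measure (EuclideanSpace ℝ (Fin m)))
    (fun r => (Ioc ε' ε).indicator (fun r => r ^ (α - (m:ℝ))) r)
  rw [finrank_euclideanSpace_fin] at step3
  have step4 : ∫ y in Ioi (0:ℝ), y ^ (m - 1) •
      (Ioc ε' ε).indicator (fun r => r ^ (α - (m:ℝ))) y = (ε ^ α - ε' ^ α) / α := by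
    have hrw : ∀ y : ℝ, y ^ (m - 1) • (Ioc ε' ε).indicator (fun r => r ^ (α - (m:ℝ))) y =
        (Ioc ε' ε).indicator (fun r => r ^ (m - 1) * r ^ (α - (m:ℝ))) y := by
      intro y
      by_cases h : y ∈ Ioc ε' ε <;> simp [Set.indicator_apply, h, smul_eq_mul]
    simp only [hrw]
    rw [setIntegral_indicator measurableSet_Ioc]
    have hinter : Ioi (0:ℝ) ∩ Ioc ε' ε = Ioc ε' ε :=
      inter_eq_right.mpr (fun y hy => lt_trans h0 hy.1)
    rw [hinter, ← intervalIntegral.integral_of_le hle]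
    have hEq : Set.EqOn (fun y : ℝ => y ^ (m - 1) * y ^ (α - (m:ℝ)))
        (fun y : ℝ => y ^ (α - 1)) (Set.uIcc ε' ε) := by
      intro y hy
      rw [Set.uIcc_of_le hle] at hy
      have hy0 : 0 < y := lt_of_lt_of_le h0 hy.1
      simp only
      rw [← Real.rpow_natCast y (m - 1), ← Real.rpow_add hy0,
        Nat.cast_sub (by omega), Nat.cast_one]
      congr 1
      ring
    rw [intervalIntegral.integral_congr hEq,
      integral_rpow (Or.inr ⟨by linarith, ?_⟩)]
    · norm_num
    · rw [Set.uIcc_of_le hle]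
      intro h
      exact absurd h.1 (by linarith)
  rw [step1, step2, step3, step4]
  rw [nsmul_eq_mul, smul_eq_mul, sphereArea]
  rw [div_sub_div_same, eq_div_iff (neg_ne_zero.mpr hα0)] at *
  field_simp
  simp only [measureReal_def]
  ring

/-- The value of the potential, for `closedBall x ε ⊆ Ω`. -/
lemma Vpot_eq (hm : 0 < m) {Ω : Set (EuclideanSpace ℝ (Fin m))}
    (hmeas : MeasurableSet Ω) (hfin : volume Ω ≠ ∞) (hα : α < 0)
    {x : EuclideanSpace ℝ (Fin m)} {ε : ℝ} (hε : 0 < ε)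
    (hsub : closedBall x ε ⊆ Ω) :
    Vpot m Ω α x =
      (∫ ξ in Ω \ closedBall x ε, ‖x - ξ‖ ^ (α - m)) - sphereArea m * ε ^ α / (-α) := by
  apply Filter.Tendsto.limUnder_eq
  apply Filter.Tendsto.congr' _ tendsto_const_nhds
  filter_upwards [Ioc_mem_nhdsGT_of_mem (Set.left_mem_Ico.mpr hε)] with ε' hε'
  rw [if_neg hα.ne]
  have h0' : (0:ℝ) < ε' := hε'.1
  have hle : ε' ≤ ε := hε'.2
  have hballs : closedBall x ε' ⊆ closedBall x ε := closedBall_subset_closedBall hle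
  have hsplit : Ω \ closedBall x ε' =
      (Ω \ closedBall x ε) ∪ (closedBall x ε \ closedBall x ε') := by
    ext ξ
    constructor
    · rintro ⟨hΩξ, hξ⟩
      by_cases h : ξ ∈ closedBall x ε
      · exact Or.inr ⟨h, hξ⟩
      · exact Or.inl ⟨hΩξ, h⟩
    · rintro (⟨hΩξ, hξ⟩ | ⟨hξ, hξ'⟩)
      · exact ⟨hΩξ, fun h => hξ (hballs h)⟩
      · exact ⟨hsub hξ, hξ'⟩
  have hdisj : Disjoint (Ω \ closedBall x ε) (closedBall x ε \ closedBall x ε') :=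
    Set.disjoint_left.mpr (fun ξ h1 h2 => h1.2 h2.1)
  have hI1 : IntegrableOn (fun ξ => ‖x - ξ‖ ^ (α - (m:ℝ))) (Ω \ closedBall x ε) := by
    refine integrableOn_kernel_away hα hε x (hmeas.diff measurableSet_closedBall)
      (by exact ((measure_mono diff_subset).trans_lt hfin.lt_top).ne) (fun ξ hξ => ?_)
    have := hξ.2
    rw [mem_closedBall, dist_comm, dist_eq_norm] at this
    exact le_of_not_ge this
  have hI2 : IntegrableOn (fun ξ => ‖x - ξ‖ ^ (α - (m:ℝ)))
      (closedBall x ε \ closedBall x ε') := by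
    refine integrableOn_kernel_away hα h0' x
      (measurableSet_closedBall.diff measurableSet_closedBall)
      (by exact ((measure_mono diff_subset).trans_lt
        (measure_closedBall_lt_top)).ne) (fun ξ hξ => ?_)
    have := hξ.2
    rw [mem_closedBall, dist_comm, dist_eq_norm] at this
    exact le_of_not_ge this
  rw [hsplit, setIntegral_union hdisj
    (measurableSet_closedBall.diff measurableSet_closedBall) hI1 hI2,
    annulus_integral hm hα x h0' hle]
  ring

end Aux

/-- For `α < 0`, the renormalized Riesz potential of a body is continuous
on the interior of the body. -/
theorem stmt_3 (m : ℕ) (Ω : Set (EuclideanSpace ℝ (Fin m))) (hΩ : IsBody m Ω)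
    (α : ℝ) (hα : α < 0) :
    ContinuousOn (Vpot m Ω α) (interior Ω) := by
  rcases Nat.eq_zero_or_pos m with hm | hm
  · subst hm
    haveI : Subsingleton (EuclideanSpace ℝ (Fin 0)) :=
      ⟨fun a b => PiLp.ext fun i => i.elim0⟩
    exact (continuousOn_const (c := Vpot 0 Ω α 0)).congr
      (fun y _ => by rw [Subsingleton.elim y (0 : EuclideanSpace ℝ (Fin 0))])
  obtain ⟨O, hO, hObdd, -, rfl⟩ := hΩ
  set Ω := closure O
  have hΩcpt : IsCompact Ω :=
    Metric.isCompact_of_isClosed_isBounded isClosed_closure hObdd.closure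
  have hmeas : MeasurableSet Ω := isClosed_closure.measurableSet
  have hfin : volume Ω ≠ ∞ := hΩcpt.measure_lt_top.ne
  intro x₀ hx₀
  apply ContinuousAt.continuousWithinAt
  obtain ⟨r, hr, hball⟩ := Metric.isOpen_iff.mp isOpen_interior x₀ hx₀
  set ε : ℝ := r / 2 with hε_def
  have hε : 0 < ε := by positivity
  have hsub : ∀ x ∈ ball x₀ (r / 2), closedBall x ε ⊆ Ω := by
    intro x hx y hy
    refine interior_subset (hball ?_)
    rw [mem_ball] at hx ⊢
    rw [mem_closedBall] at hy
    calc dist y x₀ ≤ dist y x + dist x x₀ := dist_triangle _ _ _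
    _ < ε + r / 2 := add_lt_add_of_le_of_lt hy hx
    _ = r := by rw [hε_def]; ring
  set C : ℝ := sphereArea m * ε ^ α / (-α) +
    ε ^ (α - (m:ℝ)) * (volume (closedBall (0 : EuclideanSpace ℝ (Fin m)) ε)).toReal with hC_def
  set g : EuclideanSpace ℝ (Fin m) → ℝ :=
    fun x => ∫ ξ in Ω, (max ‖x - ξ‖ ε) ^ (α - (m:ℝ)) with hg_def
  have hgc : Continuous g := by
    rw [hg_def]
    apply continuous_of_dominated (bound := fun _ => ε ^ (α - (m:ℝ)))
    · intro x
      exact (((continuous_const.sub continuous_id).norm.max continuous_const).rpow_const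
        (fun ξ => Or.inl (ne_of_gt (lt_of_lt_of_le hε (le_max_right _ _))))).measurable.aestronglyMeasurable
    · intro x
      refine Filter.Eventually.of_forall fun ξ => ?_
      rw [Real.norm_eq_abs, abs_of_nonneg (Real.rpow_nonneg (le_trans hε.le (le_max_right _ _)) _)]
      refine Real.rpow_le_rpow_of_nonpos hε (le_max_right _ _) ?_
      have : (0:ℝ) ≤ m := Nat.cast_nonneg m
      linarith
    · exact integrableOn_const hfin
    · refine Filter.Eventually.of_forall fun ξ => ?_
      refine Continuous.rpow_const ?_ (fun x => Or.inl ?_)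
      · exact ((continuous_id.sub continuous_const).norm.max continuous_const)
      · exact ne_of_gt (lt_of_lt_of_le hε (le_max_right _ _))
  have heq : ∀ x ∈ ball x₀ (r / 2), Vpot m Ω α x = g x - C := by
    intro x hx
    have hsubx := hsub x hx
    rw [Vpot_eq hm hmeas hfin hα hε hsubx]
    have hΩsplit : (Ω \ closedBall x ε) ∪ closedBall x ε = Ω :=
      Set.diff_union_of_subset hsubx
    have hdisj : Disjoint (Ω \ closedBall x ε) (closedBall x ε) := disjoint_sdiff_left
    have hI1 : IntegrableOn (fun ξ => (max ‖x - ξ‖ ε) ^ (α - (m:ℝ))) (Ω \ closedBall x ε) :=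
      integrableOn_max_rpow hα hε x ((measure_mono diff_subset).trans_lt hfin.lt_top).ne
    have hI2 : IntegrableOn (fun ξ => (max ‖x - ξ‖ ε) ^ (α - (m:ℝ))) (closedBall x ε) :=
      integrableOn_max_rpow hα hε x measure_closedBall_lt_top.ne
    have hgx : g x = (∫ ξ in Ω \ closedBall x ε, (max ‖x - ξ‖ ε) ^ (α - (m:ℝ))) +
        ∫ ξ in closedBall x ε, (max ‖x - ξ‖ ε) ^ (α - (m:ℝ)) := by
      show (∫ ξ in Ω, (max ‖x - ξ‖ ε) ^ (α - (m:ℝ))) = _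
      conv_lhs => rw [← hΩsplit]
      rw [setIntegral_union hdisj measurableSet_closedBall hI1 hI2]
    have hout : ∫ ξ in Ω \ closedBall x ε, (max ‖x - ξ‖ ε) ^ (α - (m:ℝ)) =
        ∫ ξ in Ω \ closedBall x ε, ‖x - ξ‖ ^ (α - (m:ℝ)) := by
      refine setIntegral_congr_fun (hmeas.diff measurableSet_closedBall) (fun ξ hξ => ?_)
      have := hξ.2
      rw [mem_closedBall, dist_comm, dist_eq_norm] at this
      rw [max_eq_left (le_of_not_ge this)]
    have hin : ∫ ξ in closedBall x ε, (max ‖x - ξ‖ ε) ^ (α - (m:ℝ)) =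
        ε ^ (α - (m:ℝ)) * (volume (closedBall (0 : EuclideanSpace ℝ (Fin m)) ε)).toReal := by
      have hcongr : ∀ ξ ∈ closedBall x ε,
          (max ‖x - ξ‖ ε) ^ (α - (m:ℝ)) = ε ^ (α - (m:ℝ)) := by
        intro ξ hξ
        rw [mem_closedBall, dist_comm, dist_eq_norm] at hξ
        rw [max_eq_right hξ]
      rw [setIntegral_congr_fun measurableSet_closedBall hcongr, setIntegral_const,
        Measure.addHaar_closedBall_center, smul_eq_mul, mul_comm]
      rw [measureReal_def, Measure.addHaar_closedBall_center]
    rw [hgx, hout, hin, hC_def]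
    ring
  have hmemnhds : ball x₀ (r / 2) ∈ nhds x₀ :=
    isOpen_ball.mem_nhds (mem_ball_self (by positivity))
  have hcg : ContinuousAt (fun x => g x - C) x₀ := (hgc.sub continuous_const).continuousAt
  exact hcg.congr (Filter.eventuallyEq_of_mem hmemnhds (fun y hy => (heq y hy).symm))
end
end

section
/- Let α ≤ 0, 0 < κ ≤ π, 0 < δ ≤ ∞, and 0 < R < D. Let C_θ(Re_1) denote the open cone of vertex Re_1, axis direction obtained by rotating e_1 by angle θ in the (e_1,e_m)-plane, aperture angle κ and height δ. If δ ≤ D − R or δ ≥ sqrt(D² − R²), then the minimum over θ ∈ [0, (π−κ)/2] of ∫_{C_θ(Re_1) ∩ B_D(0)} |ξ|^{α−m} dξ is attained at θ = 0. -/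
open MeasureTheory Metric Set Filter
open scoped ENNReal NNReal Real
noncomputable section

/-- The cone `C_θ(R e₁; κ, δ)`: vertex `R e₁`, axis `e₁` rotated by `θ` in the
`(e₁, e_m)`-plane, aperture `κ`, height `δ`. -/
def coneTheta (m : ℕ) (hm : 2 ≤ m) (θ κ : ℝ) (δ : ℝ≥0∞) (R : ℝ) :
    Set (EuclideanSpace ℝ (Fin m)) :=
  cone m (R • EuclideanSpace.single (⟨0, by omega⟩ : Fin m) (1:ℝ))
    (Real.cos θ • EuclideanSpace.single (⟨0, by omega⟩ : Fin m) (1:ℝ) +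
      Real.sin θ • EuclideanSpace.single (⟨m - 1, by omega⟩ : Fin m) (1:ℝ)) κ δ

/-- The comparison function `E(R)` built from the cone integrals. -/
def Efun (m : ℕ) (hm : 2 ≤ m) (α κ : ℝ) (δ : ℝ≥0∞) (D R0 R : ℝ) : ℝ :=
  sInf ((fun θ =>
    (∫ ξ in coneTheta m hm θ κ δ R ∩ closedBall 0 D, ‖ξ‖ ^ (α - m)) -
      ∫ ξ in closedBall (0 : EuclideanSpace ℝ (Fin m)) D \ closedBall 0 R0,
        ‖ξ‖ ^ (α - m)) '' Set.Icc 0 ((Real.pi - κ) / 2))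


private def reflLin (m : ℕ) (i0 im : Fin m) (θ : ℝ) :
    EuclideanSpace ℝ (Fin m) →ₗ[ℝ] EuclideanSpace ℝ (Fin m) where
  toFun z := WithLp.toLp 2 fun j => if j = i0 then Real.cos θ * z i0 + Real.sin θ * z im
    else if j = im then Real.sin θ * z i0 - Real.cos θ * z im else z j
  map_add' x y := by
    ext j
    simp only [PiLp.add_apply, PiLp.toLp_apply]
    split_ifs <;> ring
  map_smul' r x := by
    ext j
    simp only [PiLp.smul_apply, PiLp.toLp_apply, smul_eq_mul, RingHom.id_apply]
    split_ifs <;> ring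

private lemma reflLin_apply_i0 (m : ℕ) (i0 im : Fin m) (θ : ℝ)
    (z : EuclideanSpace ℝ (Fin m)) :
    reflLin m i0 im θ z i0 = Real.cos θ * z i0 + Real.sin θ * z im := by
  simp [reflLin]

private lemma reflLin_apply_im (m : ℕ) (i0 im : Fin m) (θ : ℝ) (hne : i0 ≠ im)
    (z : EuclideanSpace ℝ (Fin m)) :
    reflLin m i0 im θ z im = Real.sin θ * z i0 - Real.cos θ * z im := by
  simp [reflLin, hne.symm]

private lemma reflLin_invol (m : ℕ) (i0 im : Fin m) (θ : ℝ) (hne : i0 ≠ im) :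
    Function.Involutive (reflLin m i0 im θ) := by
  intro z
  have h := Real.sin_sq_add_cos_sq θ
  ext j
  by_cases h1 : j = i0
  · rw [h1, reflLin_apply_i0, reflLin_apply_i0, reflLin_apply_im m i0 im θ hne]
    linear_combination (z i0) * h
  · by_cases h2 : j = im
    · rw [h2, reflLin_apply_im m i0 im θ hne, reflLin_apply_i0,
        reflLin_apply_im m i0 im θ hne]
      linear_combination (z im) * h
    · show (if j = i0 then _ else if j = im then _ else reflLin m i0 im θ z j) = z j
      rw [if_neg h1, if_neg h2]
      show (if j = i0 then _ else if j = im then _ else z j) = z j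
      rw [if_neg h1, if_neg h2]

private lemma reflLin_norm (m : ℕ) (i0 im : Fin m) (θ : ℝ) (hne : i0 ≠ im)
    (z : EuclideanSpace ℝ (Fin m)) : ‖reflLin m i0 im θ z‖ = ‖z‖ := by
  have h := Real.sin_sq_add_cos_sq θ
  rw [EuclideanSpace.norm_eq, EuclideanSpace.norm_eq]
  congr 1
  have him : im ∈ Finset.univ.erase i0 := Finset.mem_erase.2 ⟨hne.symm, Finset.mem_univ _⟩
  have key : ∀ w : EuclideanSpace ℝ (Fin m),
      ∑ j, ‖w j‖ ^ 2 = ‖w i0‖ ^ 2 + (‖w im‖ ^ 2 +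
        ∑ j ∈ (Finset.univ.erase i0).erase im, ‖w j‖ ^ 2) := by
    intro w
    rw [← Finset.add_sum_erase _ _ (Finset.mem_univ i0), ← Finset.add_sum_erase _ _ him]
  rw [key, key]
  have htail : ∀ j ∈ (Finset.univ.erase i0).erase im,
      ‖reflLin m i0 im θ z j‖ ^ 2 = ‖z j‖ ^ 2 := by
    intro j hj
    have hj2 : j ≠ im := (Finset.mem_erase.1 hj).1
    have hj1 : j ≠ i0 := (Finset.mem_erase.1 (Finset.mem_erase.1 hj).2).1
    have : reflLin m i0 im θ z j = z j := by
      show (if j = i0 then _ else if j = im then _ else z j) = z j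
      rw [if_neg hj1, if_neg hj2]
    rw [this]
  rw [Finset.sum_congr rfl htail]
  rw [reflLin_apply_i0, reflLin_apply_im m i0 im θ hne]
  simp only [Real.norm_eq_abs, sq_abs]
  nlinarith [h]

/-- The reflection of the `(e₁, eₘ)`-plane swapping direction `e₁` with the direction
at angle `θ`, as a linear isometry equivalence. -/
private def reflIso (m : ℕ) (i0 im : Fin m) (θ : ℝ) (hne : i0 ≠ im) :
    EuclideanSpace ℝ (Fin m) ≃ₗᵢ[ℝ] EuclideanSpace ℝ (Fin m) :=
  { LinearEquiv.ofInvolutive (reflLin m i0 im θ) (reflLin_invol m i0 im θ hne) with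
    norm_map' := reflLin_norm m i0 im θ hne }

private lemma reflIso_apply (m : ℕ) (i0 im : Fin m) (θ : ℝ) (hne : i0 ≠ im)
    (z : EuclideanSpace ℝ (Fin m)) :
    reflIso m i0 im θ hne z = reflLin m i0 im θ z := rfl

set_option maxHeartbeats 1000000 in
/-- Under the height condition `δ ≤ D - R` or `δ ≥ √(D²-R²)`, the minimum over
`θ ∈ [0, (π-κ)/2]` of the cone integral is attained at `θ = 0`. -/
theorem stmt_9 (m : ℕ) (hm : 2 ≤ m) (α : ℝ) (hα : α ≤ 0)
    (κ : ℝ) (hκ0 : 0 < κ) (hκπ : κ ≤ Real.pi) (δ : ℝ≥0∞) (hδ : 0 < δ)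
    (R D : ℝ) (hR : 0 < R) (hRD : R < D)
    (hδcase : δ ≤ ENNReal.ofReal (D - R) ∨ ENNReal.ofReal (Real.sqrt (D^2 - R^2)) ≤ δ) :
    ∀ θ ∈ Set.Icc (0:ℝ) ((Real.pi - κ) / 2),
      (∫ ξ in coneTheta m hm 0 κ δ R ∩ closedBall 0 D, ‖ξ‖ ^ (α - m)) ≤
        ∫ ξ in coneTheta m hm θ κ δ R ∩ closedBall 0 D, ‖ξ‖ ^ (α - m) := by
  rintro θ ⟨hθ0, hθle⟩
  have hπ := Real.pi_pos
  have hθhalf : θ < Real.pi / 2 := by linarith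
  set i0 : Fin m := ⟨0, by omega⟩ with hi0def
  set im : Fin m := ⟨m - 1, by omega⟩ with himdef
  have hne : i0 ≠ im := by
    simp only [hi0def, himdef, ne_eq, Fin.mk.injEq]
    omega
  set x0 : EuclideanSpace ℝ (Fin m) := R • EuclideanSpace.single i0 (1:ℝ) with hx0def
  set v : ℝ → EuclideanSpace ℝ (Fin m) := fun t =>
    Real.cos t • EuclideanSpace.single i0 (1:ℝ) +
      Real.sin t • EuclideanSpace.single im (1:ℝ) with hvdef
  -- basic constants
  have hc : 0 ≤ Real.cos (κ / 2) :=
    Real.cos_nonneg_of_mem_Icc ⟨by linarith, by linarith⟩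
  set p : ℝ := α - m with hpdef
  have hm2 : (2:ℝ) ≤ (m:ℝ) := by exact_mod_cast hm
  have hpneg : p ≤ 0 := by simp only [hpdef]; linarith
  -- inner product computations
  have hsingle_i0 : ∀ (z : EuclideanSpace ℝ (Fin m)),
      (inner ℝ z (EuclideanSpace.single i0 (1:ℝ)) : ℝ) = z i0 := by
    intro z
    rw [EuclideanSpace.inner_single_right]
    simp
  have hsingle_im : ∀ (z : EuclideanSpace ℝ (Fin m)),
      (inner ℝ z (EuclideanSpace.single im (1:ℝ)) : ℝ) = z im := by
    intro z
    rw [EuclideanSpace.inner_single_right]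
    simp
  have hinner : ∀ (z : EuclideanSpace ℝ (Fin m)) (t : ℝ),
      (inner ℝ z (v t) : ℝ) = Real.cos t * z i0 + Real.sin t * z im := by
    intro z t
    rw [hvdef]
    rw [inner_add_right, real_inner_smul_right, real_inner_smul_right,
      hsingle_i0, hsingle_im]
  have hinner0 : ∀ (z : EuclideanSpace ℝ (Fin m)),
      (inner ℝ z (v 0) : ℝ) = z i0 := by
    intro z
    rw [hinner]
    simp
  have hx0i0 : x0 i0 = R := by
    rw [hx0def]
    simp [EuclideanSpace.single_apply]
  have hx0im : x0 im = 0 := by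
    rw [hx0def]
    simp [EuclideanSpace.single_apply, hne.symm]
  have hx0inner : ∀ t, (inner ℝ x0 (v t) : ℝ) = R * Real.cos t := by
    intro t
    rw [hinner, hx0i0, hx0im]
    ring
  -- norm of the axis vector
  have hvnorm : ∀ t, ‖v t‖ = 1 := by
    intro t
    have hip : (inner ℝ (Real.cos t • EuclideanSpace.single i0 (1:ℝ))
        (Real.sin t • EuclideanSpace.single im (1:ℝ)) : ℝ) = 0 := by
      rw [real_inner_smul_left, real_inner_smul_right, hsingle_im]
      have h0 : (EuclideanSpace.single i0 (1:ℝ)) im = 0 := by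
        rw [EuclideanSpace.single_apply, if_neg (Ne.symm hne)]
      rw [h0]
      ring
    have hsq : ‖v t‖ ^ 2 = 1 := by
      rw [hvdef]
      simp only
      rw [norm_add_sq_real, hip, norm_smul, norm_smul]
      simp only [EuclideanSpace.norm_single, norm_one, mul_one, Real.norm_eq_abs,
        mul_zero, add_zero, sq_abs]
      exact Real.cos_sq_add_sin_sq t
    have h0 : (0:ℝ) ≤ ‖v t‖ := norm_nonneg _
    rw [← Real.sqrt_sq h0, hsq, Real.sqrt_one]
  -- cones are open
  have hopen : ∀ w : EuclideanSpace ℝ (Fin m), IsOpen (cone m x0 w κ δ) := by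
    intro w
    have heq : cone m x0 w κ δ = {ξ | 0 < ‖ξ - x0‖} ∩ ({ξ | ENNReal.ofReal ‖ξ - x0‖ < δ} ∩
        {ξ | ‖ξ - x0‖ * Real.cos (κ / 2) < (inner ℝ (ξ - x0) w : ℝ)}) := rfl
    rw [heq]
    refine IsOpen.inter ?_ (IsOpen.inter ?_ ?_)
    · exact isOpen_lt continuous_const ((continuous_id.sub continuous_const).norm)
    · exact isOpen_lt
        (ENNReal.continuous_ofReal.comp ((continuous_id.sub continuous_const).norm))
        continuous_const
    · exact isOpen_lt (((continuous_id.sub continuous_const).norm).mul continuous_const)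
        (Continuous.inner (continuous_id.sub continuous_const) continuous_const)
  -- lower bound for the norm on a cone
  have hlb : ∀ t, 0 ≤ t → t < Real.pi / 2 →
      ∀ ξ ∈ cone m x0 (v t) κ δ, R * Real.cos t < ‖ξ‖ := by
    rintro t ht0 htlt ξ ⟨h1, h2, h3⟩
    have hz : (0:ℝ) ≤ ‖ξ - x0‖ * Real.cos (κ / 2) := mul_nonneg (norm_nonneg _) hc
    have hsplit : (inner ℝ (ξ - x0) (v t) : ℝ) = inner ℝ ξ (v t) - inner ℝ x0 (v t) :=
      inner_sub_left ξ x0 (v t)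
    have h4 : R * Real.cos t < (inner ℝ ξ (v t) : ℝ) := by
      have := lt_of_le_of_lt hz h3
      rw [hsplit, hx0inner] at this
      linarith
    have h5 : (inner ℝ ξ (v t) : ℝ) ≤ ‖ξ‖ := by
      have := real_inner_le_norm ξ (v t)
      rwa [hvnorm, mul_one] at this
    linarith
  -- the reflection isometry and the associated affine map
  set S := reflIso m i0 im θ hne with hSdef
  have hSi0 : ∀ z : EuclideanSpace ℝ (Fin m),
      (S z) i0 = Real.cos θ * z i0 + Real.sin θ * z im := fun z =>
    reflLin_apply_i0 m i0 im θ z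
  have hSim : ∀ z : EuclideanSpace ℝ (Fin m),
      (S z) im = Real.sin θ * z i0 - Real.cos θ * z im := fun z =>
    reflLin_apply_im m i0 im θ hne z
  have hSnorm : ∀ z : EuclideanSpace ℝ (Fin m), ‖S z‖ = ‖z‖ := fun z => S.norm_map z
  have hSvθ : ∀ z : EuclideanSpace ℝ (Fin m), (inner ℝ (S z) (v θ) : ℝ) = z i0 := by
    intro z
    rw [hinner, hSi0, hSim]
    linear_combination (z i0) * Real.sin_sq_add_cos_sq θ
  have hSv0 : ∀ z : EuclideanSpace ℝ (Fin m),
      (inner ℝ (S z) (v 0) : ℝ) = (inner ℝ z (v θ) : ℝ) := by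
    intro z
    rw [hinner0, hSi0, hinner]
  set Φ : EuclideanSpace ℝ (Fin m) → EuclideanSpace ℝ (Fin m) :=
    fun ξ => x0 + S (ξ - x0) with hΦdef
  have hΦsub : ∀ ξ, Φ ξ - x0 = S (ξ - x0) := by
    intro ξ
    rw [hΦdef]
    simp
  -- membership transfer under Φ
  have hmemθ : ∀ ξ ∈ cone m x0 (v 0) κ δ, Φ ξ ∈ cone m x0 (v θ) κ δ := by
    rintro ξ ⟨h1, h2, h3⟩
    rw [hinner0] at h3
    refine ⟨?_, ?_, ?_⟩
    · rw [hΦsub, hSnorm]; exact h1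
    · rw [hΦsub, hSnorm]; exact h2
    · rw [hΦsub, hSnorm, hSvθ]; exact h3
  have hnotmem : ∀ ξ, ξ ∈ cone m x0 (v 0) κ δ → ξ ∉ cone m x0 (v θ) κ δ →
      Φ ξ ∉ cone m x0 (v 0) κ δ ∧ ‖Φ ξ‖ ≤ ‖ξ‖ := by
    rintro ξ ⟨h1, h2, h3⟩ hnot
    rw [hinner0] at h3
    have hle : (inner ℝ (ξ - x0) (v θ) : ℝ) ≤ ‖ξ - x0‖ * Real.cos (κ / 2) := by
      by_contra hlt
      exact hnot ⟨h1, h2, lt_of_not_ge hlt⟩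
    have hlt0 : (inner ℝ (ξ - x0) (v θ) : ℝ) < (ξ - x0) i0 := lt_of_le_of_lt hle h3
    constructor
    · rintro ⟨g1, g2, g3⟩
      rw [hΦsub, hSnorm, hSv0] at g3
      exact absurd g3 (not_lt.mpr hle)
    · -- norm comparison
      have hexp : ∀ w : EuclideanSpace ℝ (Fin m),
          ‖x0 + w‖ ^ 2 = ‖x0‖ ^ 2 + 2 * (R * w i0) + ‖w‖ ^ 2 := by
        intro w
        rw [norm_add_sq_real]
        congr 2
        rw [hx0def, real_inner_smul_left, EuclideanSpace.inner_single_left]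
        simp
      have hxieq : ξ = x0 + (ξ - x0) := by abel
      have hSi0lt : (S (ξ - x0)) i0 < (ξ - x0) i0 := by
        have : (S (ξ - x0)) i0 = (inner ℝ (ξ - x0) (v θ) : ℝ) := by
          rw [hSi0, hinner]
        rw [this]
        exact hlt0
      have hsq : ‖Φ ξ‖ ^ 2 ≤ ‖ξ‖ ^ 2 := by
        conv_rhs => rw [hxieq]
        rw [hΦdef]
        simp only
        rw [hexp, hexp, hSnorm]
        nlinarith [hSi0lt, hR]
      have h0Φ : (0:ℝ) ≤ ‖Φ ξ‖ := norm_nonneg _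
      have h0ξ : (0:ℝ) ≤ ‖ξ‖ := norm_nonneg _
      nlinarith [hsq, h0Φ, h0ξ]
  -- measure-theoretic facts
  have hΦmp : MeasurePreserving Φ volume volume := by
    have h1 : MeasurePreserving (fun ξ : EuclideanSpace ℝ (Fin m) => ξ - x0)
        volume volume := measurePreserving_sub_right volume x0
    have h2 : MeasurePreserving (S : EuclideanSpace ℝ (Fin m) → EuclideanSpace ℝ (Fin m))
        volume volume := S.measurePreserving
    have h3 : MeasurePreserving (fun w : EuclideanSpace ℝ (Fin m) => x0 + w)
        volume volume := measurePreserving_add_left volume x0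
    exact (h3.comp h2).comp h1
  have hΦcont : Continuous Φ :=
    continuous_const.add (S.continuous.comp (continuous_id.sub continuous_const))
  have hΦinj : Function.Injective Φ := by
    intro a b hab
    rw [hΦdef] at hab
    simp only at hab
    have h1 := add_left_cancel hab
    have h2 := S.injective h1
    exact sub_left_inj.mp h2
  have hΦemb : MeasurableEmbedding Φ := hΦcont.measurableEmbedding hΦinj
  -- the two sets
  set A := cone m x0 (v 0) κ δ ∩ closedBall (0 : EuclideanSpace ℝ (Fin m)) D with hAdef
  set C := cone m x0 (v θ) κ δ ∩ closedBall (0 : EuclideanSpace ℝ (Fin m)) D with hCdef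
  have hmeasA : MeasurableSet A := ((hopen _).measurableSet).inter measurableSet_closedBall
  have hmeasC : MeasurableSet C := ((hopen _).measurableSet).inter measurableSet_closedBall
  -- integrability
  have hIntOn : ∀ t, 0 ≤ t → t < Real.pi / 2 →
      IntegrableOn (fun ξ : EuclideanSpace ℝ (Fin m) => ‖ξ‖ ^ p)
        (cone m x0 (v t) κ δ ∩ closedBall 0 D) volume := by
    intro t ht0 htlt
    have hmeasS : MeasurableSet (cone m x0 (v t) κ δ ∩ closedBall 0 D) :=
      ((hopen _).measurableSet).inter measurableSet_closedBall
    have hcos : 0 < Real.cos t := Real.cos_pos_of_mem_Ioo ⟨by linarith, htlt⟩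
    have hRc : 0 < R * Real.cos t := mul_pos hR hcos
    have hmeas : AEStronglyMeasurable (fun ξ : EuclideanSpace ℝ (Fin m) => ‖ξ‖ ^ p)
        (volume.restrict (cone m x0 (v t) κ δ ∩ closedBall 0 D)) := by
      refine ContinuousOn.aestronglyMeasurable ?_ hmeasS
      refine ContinuousOn.rpow_const continuous_norm.continuousOn ?_
      intro ξ hξ
      exact Or.inl (ne_of_gt (lt_trans hRc (hlb t ht0 htlt ξ hξ.1)))
    refine Integrable.mono'
      (g := fun _ : EuclideanSpace ℝ (Fin m) => (R * Real.cos t) ^ p) ?_ hmeas ?_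
    · exact (integrableOn_const_iff).mpr
        (Or.inr ((measure_mono inter_subset_right).trans_lt measure_closedBall_lt_top))
    · rw [ae_restrict_iff' hmeasS]
      refine ae_of_all _ fun ξ hξ => ?_
      rw [Real.norm_eq_abs, abs_of_nonneg (Real.rpow_nonneg (norm_nonneg _) _)]
      exact Real.rpow_le_rpow_of_nonpos hRc (hlb t ht0 htlt ξ hξ.1).le hpneg
  have h0half : (0:ℝ) < Real.pi / 2 := by linarith
  have hIntA : IntegrableOn (fun ξ : EuclideanSpace ℝ (Fin m) => ‖ξ‖ ^ p) A volume :=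
    hIntOn 0 le_rfl h0half
  have hIntC : IntegrableOn (fun ξ : EuclideanSpace ℝ (Fin m) => ‖ξ‖ ^ p) C volume :=
    hIntOn θ hθ0 hθhalf
  -- image property
  have himg : Φ '' (A \ C) ⊆ C \ A := by
    rintro _ ⟨ξ, ⟨⟨hξcone, hξball⟩, hξnC⟩, rfl⟩
    have hξnθ : ξ ∉ cone m x0 (v θ) κ δ := fun hmem => hξnC ⟨hmem, hξball⟩
    obtain ⟨hΦnot, hΦle⟩ := hnotmem ξ hξcone hξnθ
    have hΦθ : Φ ξ ∈ cone m x0 (v θ) κ δ := hmemθ ξ hξcone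
    refine ⟨⟨hΦθ, ?_⟩, fun hmem => hΦnot hmem.1⟩
    rw [mem_closedBall_zero_iff] at hξball ⊢
    exact hΦle.trans hξball
  -- pointwise comparison on A \ C
  have hptwise : ∀ ξ ∈ A \ C, ‖ξ‖ ^ p ≤ ‖Φ ξ‖ ^ p := by
    rintro ξ ⟨⟨hξcone, hξball⟩, hξnC⟩
    have hξnθ : ξ ∉ cone m x0 (v θ) κ δ := fun hmem => hξnC ⟨hmem, hξball⟩
    obtain ⟨-, hΦle⟩ := hnotmem ξ hξcone hξnθ
    have hΦθ : Φ ξ ∈ cone m x0 (v θ) κ δ := hmemθ ξ hξcone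
    have hcosθ : 0 < Real.cos θ := Real.cos_pos_of_mem_Ioo ⟨by linarith, hθhalf⟩
    have h0Φ : 0 < ‖Φ ξ‖ := lt_trans (mul_pos hR hcosθ) (hlb θ hθ0 hθhalf _ hΦθ)
    exact Real.rpow_le_rpow_of_nonpos h0Φ hΦle hpneg
  -- key inequality between the difference pieces
  have hIntCA : IntegrableOn (fun ξ : EuclideanSpace ℝ (Fin m) => ‖ξ‖ ^ p) (C \ A)
      volume := hIntC.mono_set diff_subset
  have hsubpre : A \ C ⊆ Φ ⁻¹' (C \ A) := fun ξ hξ => himg ⟨ξ, hξ, rfl⟩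
  have hIntcomp : IntegrableOn
      ((fun ξ : EuclideanSpace ℝ (Fin m) => ‖ξ‖ ^ p) ∘ Φ) (A \ C) volume :=
    ((hΦmp.integrableOn_comp_preimage hΦemb).mpr hIntCA).mono_set hsubpre
  have hkey : (∫ ξ in A \ C, ‖ξ‖ ^ p) ≤ ∫ ξ in C \ A, ‖ξ‖ ^ p := by
    calc (∫ ξ in A \ C, ‖ξ‖ ^ p) ≤ ∫ ξ in A \ C, ‖Φ ξ‖ ^ p :=
          setIntegral_mono_on (hIntA.mono_set diff_subset) hIntcomp
            (hmeasA.diff hmeasC) hptwise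
      _ = ∫ ξ in Φ '' (A \ C), ‖ξ‖ ^ p :=
          (hΦmp.setIntegral_image_emb hΦemb (fun ξ => ‖ξ‖ ^ p) (A \ C)).symm
      _ ≤ ∫ ξ in C \ A, ‖ξ‖ ^ p := by
          refine setIntegral_mono_set hIntCA ?_ himg.eventuallyLE
          exact ae_of_all _ fun ξ => Real.rpow_nonneg (norm_nonneg _) _
  -- assemble
  have hsplitA := integral_inter_add_diff (μ := volume) (s := A) (t := C)
    (f := fun ξ : EuclideanSpace ℝ (Fin m) => ‖ξ‖ ^ p) hmeasC hIntA
  have hsplitC := integral_inter_add_diff (μ := volume) (s := C) (t := A)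
    (f := fun ξ : EuclideanSpace ℝ (Fin m) => ‖ξ‖ ^ p) hmeasA hIntC
  rw [inter_comm C A] at hsplitC
  have hgoal : (∫ ξ in A, ‖ξ‖ ^ p) ≤ ∫ ξ in C, ‖ξ‖ ^ p := by linarith
  exact hgoal
end
end

section
/- Let m ≥ 2, D = diam Ω > 0 and 0 < R_0 < D, and define f(R) = sin^{m−1}(φ(R))/(m−1) + (R/D)∫_{φ(R)}^{π} sin^{m−2}θ dθ − (R/R_0)∫_0^{π} sin^{m−2}θ dθ, where φ(R) = arccos(R/D), for 0 ≤ R ≤ D. Then f'(R) < 0 and f''(R) > 0 on (0, D), i.e., f is strictly decreasing and strictly convex. -/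
open MeasureTheory Metric Set Filter
open scoped ENNReal NNReal Real
noncomputable section

/-- The auxiliary function
`f(R) = sin^{m-1}(φ(R))/(m-1) + (R/D)∫_{φ(R)}^π sin^{m-2}θ dθ − (R/R₀)∫_0^π sin^{m-2}θ dθ`,
`φ(R) = arccos(R/D)`, has `f' < 0` and `f'' > 0` on `(0, D)`, i.e. it is strictly
decreasing and strictly convex there. -/
theorem stmt_18 (m : ℕ) (hm : 2 ≤ m) (D R0 : ℝ) (hD : 0 < D) (hR0 : 0 < R0)
    (hR0D : R0 < D)
    (f : ℝ → ℝ)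
    (hf : ∀ R : ℝ, f R =
      Real.sin (Real.arccos (R / D)) ^ (m - 1) / ((m:ℝ) - 1) +
        (R / D) * (∫ θ in Real.arccos (R / D)..Real.pi, Real.sin θ ^ (m - 2)) -
        (R / R0) * ∫ θ in (0:ℝ)..Real.pi, Real.sin θ ^ (m - 2)) :
    StrictAntiOn f (Set.Ioo 0 D) ∧ StrictConvexOn ℝ (Set.Ioo 0 D) f := by
  have hcontInt : Continuous fun θ : ℝ => Real.sin θ ^ (m - 2) :=
    Real.continuous_sin.pow _
  set C : ℝ := ∫ θ in (0:ℝ)..Real.pi, Real.sin θ ^ (m - 2) with hC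
  set g : ℝ → ℝ := fun R =>
    (1 / D) * (∫ θ in Real.arccos (R / D)..Real.pi, Real.sin θ ^ (m - 2)) - (1 / R0) * C
    with hg
  -- derivative
  have hderiv : ∀ R ∈ Set.Ioo 0 D, HasDerivAt f (g R) R := by
    intro R hR
    obtain ⟨hR0', hRD⟩ := hR
    have hx1 : R / D < 1 := (div_lt_one hD).2 hRD
    have hx0 : 0 < R / D := div_pos hR0' hD
    have hs : 0 < 1 - (R / D) ^ 2 := by nlinarith
    have hsq : 0 < Real.sqrt (1 - (R / D) ^ 2) := Real.sqrt_pos.2 hs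
    have hdiv : HasDerivAt (fun R : ℝ => R / D) (1 / D) R := (hasDerivAt_id R).div_const D
    have hinner : HasDerivAt (fun R : ℝ => 1 - (R / D) ^ 2)
        (-((2 : ℕ) * (R / D) ^ (2 - 1) * (1 / D))) R := (hdiv.pow 2).const_sub 1
    have hsqrt : HasDerivAt (fun R : ℝ => Real.sqrt (1 - (R / D) ^ 2))
        (1 / (2 * Real.sqrt (1 - (R / D) ^ 2)) * -((2 : ℕ) * (R / D) ^ (2 - 1) * (1 / D))) R :=
      (Real.hasDerivAt_sqrt hs.ne').comp R hinner
    have hpow : HasDerivAt (fun R : ℝ => Real.sqrt (1 - (R / D) ^ 2) ^ (m - 1))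
        (((m - 1 : ℕ) : ℝ) * Real.sqrt (1 - (R / D) ^ 2) ^ (m - 1 - 1) *
          (1 / (2 * Real.sqrt (1 - (R / D) ^ 2)) * -((2 : ℕ) * (R / D) ^ (2 - 1) * (1 / D)))) R :=
      hsqrt.pow (m - 1)
    have harccos : HasDerivAt (fun R : ℝ => Real.arccos (R / D))
        (-(1 / Real.sqrt (1 - (R / D) ^ 2)) * (1 / D)) R :=
      by
        have ha : HasDerivAt Real.arccos (-(1 / Real.sqrt (1 - (R / D) ^ 2))) (R / D) :=
          Real.hasDerivAt_arccos (by linarith) hx1.ne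
        exact HasDerivAt.comp (h₂ := Real.arccos) (h := fun R : ℝ => R / D) R ha hdiv
    have hI : HasDerivAt (fun a : ℝ => ∫ θ in a..Real.pi, Real.sin θ ^ (m - 2))
        (-(Real.sin (Real.arccos (R / D)) ^ (m - 2))) (Real.arccos (R / D)) :=
      intervalIntegral.integral_hasDerivAt_left (hcontInt.intervalIntegrable _ _)
        (hcontInt.stronglyMeasurableAtFilter _ _) hcontInt.continuousAt
    have hcomp : HasDerivAt (fun R : ℝ => ∫ θ in Real.arccos (R / D)..Real.pi, Real.sin θ ^ (m - 2))
        (-(Real.sin (Real.arccos (R / D)) ^ (m - 2)) *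
          (-(1 / Real.sqrt (1 - (R / D) ^ 2)) * (1 / D))) R := hI.comp (h := fun R : ℝ => Real.arccos (R / D)) R harccos
    have hterm2 := hdiv.mul hcomp
    have hterm3 : HasDerivAt (fun R : ℝ => R / R0 * C) (1 / R0 * C) R := by
      simpa using ((hasDerivAt_id R).div_const R0).mul_const C
    have htotal := ((hpow.div_const ((m : ℝ) - 1)).add hterm2).sub hterm3
    have hfF : f = fun R : ℝ =>
        Real.sqrt (1 - (R / D) ^ 2) ^ (m - 1) / ((m:ℝ) - 1) +
          (R / D) * (∫ θ in Real.arccos (R / D)..Real.pi, Real.sin θ ^ (m - 2)) - R / R0 * C := by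
      funext R
      rw [hf, Real.sin_arccos]
    rw [hfF]
    convert htotal using 1
    · rfl
    · rfl
    · rfl
    rw [Real.sin_arccos]
    have hm1 : ((m - 1 : ℕ) : ℝ) = (m : ℝ) - 1 := by
      push_cast [Nat.cast_sub (by omega : 1 ≤ m)]; ring
    have hmm : m - 1 - 1 = m - 2 := by omega
    rw [hg, hm1, hmm]
    have hm1ne : (m : ℝ) - 1 ≠ 0 := by
      have : (2 : ℝ) ≤ m := by exact_mod_cast hm
      linarith
    norm_num
    generalize Real.sqrt (1 - (R / D) ^ 2) = s at hsq ⊢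
    generalize (∫ θ in Real.arccos (R / D)..Real.pi, Real.sin θ ^ (m - 2)) = I
    generalize s ^ (m - 2) = A
    field_simp
    ring
  -- g < 0
  have hCpos : 0 < C := by
    refine intervalIntegral.intervalIntegral_pos_of_pos_on
      (hcontInt.intervalIntegrable _ _) (fun x hx => ?_) Real.pi_pos
    exact pow_pos (Real.sin_pos_of_pos_of_lt_pi hx.1 hx.2) _
  have hInonneg : ∀ a b : ℝ, 0 ≤ a → a ≤ b → b ≤ Real.pi →
      0 ≤ ∫ θ in a..b, Real.sin θ ^ (m - 2) := by
    intro a b ha hab hb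
    refine intervalIntegral.integral_nonneg hab fun x hx => ?_
    exact pow_nonneg (Real.sin_nonneg_of_nonneg_of_le_pi (ha.trans hx.1) (hx.2.trans hb)) _
  have hIle : ∀ R : ℝ, 0 ≤ R →
      (∫ θ in Real.arccos (R / D)..Real.pi, Real.sin θ ^ (m - 2)) ≤ C := by
    intro R hRpos
    have hsplit : (∫ θ in (0:ℝ)..Real.arccos (R / D), Real.sin θ ^ (m - 2)) +
        (∫ θ in Real.arccos (R / D)..Real.pi, Real.sin θ ^ (m - 2)) = C :=
      intervalIntegral.integral_add_adjacent_intervals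
        (hcontInt.intervalIntegrable _ _) (hcontInt.intervalIntegrable _ _)
    have h0 : 0 ≤ ∫ θ in (0:ℝ)..Real.arccos (R / D), Real.sin θ ^ (m - 2) :=
      hInonneg 0 _ le_rfl (Real.arccos_nonneg _) (Real.arccos_le_pi _)
    linarith
  have hgneg : ∀ R ∈ Set.Ioo (0:ℝ) D, g R < 0 := by
    intro R hR
    have h1 : (1 / D) * (∫ θ in Real.arccos (R / D)..Real.pi, Real.sin θ ^ (m - 2)) ≤
        (1 / D) * C :=
      mul_le_mul_of_nonneg_left (hIle R hR.1.le) (by positivity)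
    have h2 : (1 / D) * C < (1 / R0) * C :=
      mul_lt_mul_of_pos_right (one_div_lt_one_div_of_lt hR0 hR0D) hCpos
    simp only [hg]
    linarith
  -- g strictly monotone
  have hgmono : StrictMonoOn g (Set.Ioo 0 D) := by
    intro a ha b hb hab
    have hma : a / D ∈ Set.Icc (-1 : ℝ) 1 :=
      ⟨by linarith [div_pos ha.1 hD], ((div_lt_one hD).2 ha.2).le⟩
    have hmb : b / D ∈ Set.Icc (-1 : ℝ) 1 :=
      ⟨by linarith [div_pos hb.1 hD], ((div_lt_one hD).2 hb.2).le⟩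
    have hpa : Real.arccos (b / D) < Real.arccos (a / D) :=
      Real.strictAntiOn_arccos hma hmb (by gcongr)
    have hbpos : 0 < Real.arccos (b / D) := Real.arccos_pos.2 ((div_lt_one hD).2 hb.2)
    have hapi : Real.arccos (a / D) < Real.pi := by
      have := Real.arccos_lt_pi_div_two.2 (div_pos ha.1 hD)
      linarith [Real.pi_pos]
    have hsplit : (∫ θ in Real.arccos (b / D)..Real.arccos (a / D), Real.sin θ ^ (m - 2)) +
        (∫ θ in Real.arccos (a / D)..Real.pi, Real.sin θ ^ (m - 2)) =
        ∫ θ in Real.arccos (b / D)..Real.pi, Real.sin θ ^ (m - 2) :=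
      intervalIntegral.integral_add_adjacent_intervals
        (hcontInt.intervalIntegrable _ _) (hcontInt.intervalIntegrable _ _)
    have hmid : 0 < ∫ θ in Real.arccos (b / D)..Real.arccos (a / D), Real.sin θ ^ (m - 2) := by
      refine intervalIntegral.intervalIntegral_pos_of_pos_on
        (hcontInt.intervalIntegrable _ _) (fun x hx => ?_) hpa
      exact pow_pos (Real.sin_pos_of_pos_of_lt_pi (hbpos.trans hx.1) (hx.2.trans hapi)) _
    simp only [hg]
    have hDinv : 0 < 1 / D := by positivity
    nlinarith
  have hcont : ContinuousOn f (Set.Ioo 0 D) := fun x hx =>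
    (hderiv x hx).continuousAt.continuousWithinAt
  constructor
  · refine strictAntiOn_of_deriv_neg (convex_Ioo 0 D) hcont fun x hx => ?_
    rw [interior_Ioo] at hx
    rw [(hderiv x hx).deriv]
    exact hgneg x hx
  · refine StrictMonoOn.strictConvexOn_of_deriv (convex_Ioo 0 D) hcont ?_
    rw [interior_Ioo]
    intro x hx y hy hxy
    rw [(hderiv x hx).deriv, (hderiv y hy).deriv]
    exact hgmono hx hy hxy
end
end
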